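/- Let f satisfy Assumption A and ρ > 0. Let X ⊂ ℝ^d be a nonempty compact set, (S, Σ, P₀) a probability space, and ℓ : X × S → ℝ jointly measurable with x ↦ ℓ(x; s) continuous for every s ∈ S. Assume there is a measurable envelope Z̄ : S → ℝ₊ with |ℓ(x; s)| ≤ Z̄(s) for all x, s and E_{P₀}[Z̄^{1+ε}] < ∞ for some ε > 0, and let Z₁, Z₂, … be i.i.d. with law P₀. Write F̂_n(x) := sup_{p ∈ Δ_{n,ρ}} Σ_{i=1}^n p_i ℓ(x; Z_i) and F(x) := E_{P₀}[ℓ(x; Z)]. Then min_{x∈X} F̂_n(x) − min_{x∈X} F(x) → 0 in probability, and sup_{x ∈ S_n*} dist(x, S*) → 0 in probability, where S_n* := argmin_{x∈X} F̂_n(x) and S* := argmin_{x∈X} F(x) (both nonempty by compactness and continuity). -/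

import Mathlib

open MeasureTheory ProbabilityTheory Filter Set

noncomputable section

/-- Assumption A: `f : ℝ → ℝ ∪ {+∞}` is lower semicontinuous, convex, equal to `+∞` on
negative reals, three times continuously differentiable on a neighborhood of `1`, with
`f 1 = f' 1 = 0` and `f'' 1 = 2`. -/
structure IsDivergenceFn (f : ℝ → EReal) : Prop where
  lsc : LowerSemicontinuous f
  convex : ∀ x y a b : ℝ, 0 ≤ a → 0 ≤ b → a + b = 1 →
    f (a * x + b * y) ≤ (a : EReal) * f x + (b : EReal) * f y
  eq_top_of_neg : ∀ t : ℝ, t < 0 → f t = ⊤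
  smooth : ∃ g : ℝ → ℝ, ∃ ε : ℝ, 0 < ε ∧
    (∀ t ∈ Set.Ioo (1 - ε) (1 + ε), f t = (g t : EReal)) ∧
    ContDiffOn ℝ 3 g (Set.Ioo (1 - ε) (1 + ε)) ∧
    g 1 = 0 ∧ deriv g 1 = 0 ∧ deriv (deriv g) 1 = 2

/-- The empirical `f`-divergence ball `Δ_{n,ρ}`. -/
def simplexBall (f : ℝ → EReal) (n : ℕ) (ρ : ℝ) : Set (Fin n → ℝ) :=
  {p | (∀ i, 0 ≤ p i) ∧ ∑ i, p i = 1 ∧ ∑ i, f ((n : ℝ) * p i) ≤ (ρ : EReal)}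

/-- Sample mean `z̄ = (1/n) ∑ z_i`. -/
def sampleMean {n : ℕ} (z : Fin n → ℝ) : ℝ := (∑ i, z i) / n

/-- Sample variance `s_n(z)² = (1/n) ∑ (z_i − z̄)²`. -/
def sampleVar {n : ℕ} (z : Fin n → ℝ) : ℝ := (∑ i, (z i - sampleMean z) ^ 2) / n

/-- The Huber function `h_ε`. -/
def huber (ε t : ℝ) : ℝ := if |t| ≤ ε then t ^ 2 / 2 else ε * |t| - ε ^ 2 / 2

lemma ereal_cases (x : EReal) : x = ⊥ ∨ (∃ v : ℝ, x = (v : EReal)) ∨ x = ⊤ := by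
  induction x with
  | bot => exact Or.inl rfl
  | coe v => exact Or.inr (Or.inl ⟨v, rfl⟩)
  | top => exact Or.inr (Or.inr rfl)

lemma ereal_coe_sum {ι : Type*} (s : Finset ι) (g : ι → ℝ) :
    ((∑ i ∈ s, g i : ℝ) : EReal) = ∑ i ∈ s, (g i : EReal) :=
  map_sum (⟨⟨Real.toEReal, EReal.coe_zero⟩, EReal.coe_add⟩ : ℝ →+ EReal) g s

/-- `f 1 = 0`. -/
lemma IsDivergenceFn.one_eq_zero {f : ℝ → EReal} (hf : IsDivergenceFn f) : f 1 = 0 := by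
  obtain ⟨g, ε₀, hε₀, hfg, _, hg1, _, _⟩ := hf.smooth
  rw [hfg 1 ⟨by linarith, by linarith⟩, hg1, EReal.coe_zero]

/-- Key lower bound: there is `η₀ > 0` such that for all `0 < η ≤ η₀` and `t ≥ 0`,
`f t ≥ (η/2) * max (|t-1| - η) 0`. -/
lemma IsDivergenceFn.lower_bound {f : ℝ → EReal} (hf : IsDivergenceFn f) :
    ∃ η₀ : ℝ, 0 < η₀ ∧ ∀ η : ℝ, 0 < η → η ≤ η₀ → ∀ t : ℝ, 0 ≤ t →
      ((η / 2 * max (|t - 1| - η) 0 : ℝ) : EReal) ≤ f t := by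
  obtain ⟨g, ε₀, hε₀, hfg, hg3, hg1, hg1', hg1''⟩ := hf.smooth
  set O : Set ℝ := Set.Ioo (1 - ε₀) (1 + ε₀) with hO
  have hOopen : IsOpen O := isOpen_Ioo
  have h1O : (1 : ℝ) ∈ O := ⟨by linarith, by linarith⟩
  -- differentiability facts
  have hgd : DifferentiableOn ℝ g O := hg3.differentiableOn (by norm_num)
  have hg'd : ContDiffOn ℝ 2 (deriv g) O := hg3.deriv_of_isOpen hOopen (by norm_num)
  have hgdiff : ∀ x ∈ O, DifferentiableAt ℝ g x := fun x hx =>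
    (hgd x hx).differentiableAt (hOopen.mem_nhds hx)
  have hg'diffAt : DifferentiableAt ℝ (deriv g) 1 :=
    ((hg'd.differentiableOn (by norm_num)) 1 h1O).differentiableAt (hOopen.mem_nhds h1O)
  have hDD : HasDerivAt (deriv g) 2 1 := by
    have := hg'diffAt.hasDerivAt
    rwa [hg1''] at this
  -- slope of deriv g near 1 is ≥ 1
  have hslope : Tendsto (slope (deriv g) 1) (nhdsWithin 1 {(1:ℝ)}ᶜ) (nhds 2) :=
    hasDerivAt_iff_tendsto_slope.1 hDD
  have hev : ∀ᶠ t in nhdsWithin 1 {(1:ℝ)}ᶜ, 1 ≤ slope (deriv g) 1 t :=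
    hslope.eventually (eventually_ge_nhds (by norm_num))
  rw [eventually_nhdsWithin_iff] at hev
  rcases Metric.eventually_nhds_iff.1 hev with ⟨r, hr, hball⟩
  set η₀ : ℝ := min (r / 2) (ε₀ / 2) with hη₀def
  have hη₀pos : 0 < η₀ := lt_min (by linarith) (by linarith)
  have hη₀r : η₀ < r := lt_of_le_of_lt (min_le_left _ _) (by linarith)
  have hη₀ε : η₀ < ε₀ := lt_of_le_of_lt (min_le_right _ _) (by linarith)
  -- deriv g t ≥ t - 1 for t ∈ (1, 1+η₀]; deriv g t ≤ t - 1 for t ∈ [1-η₀, 1)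
  have hslope_ge : ∀ t : ℝ, t ≠ 1 → |t - 1| ≤ η₀ → 1 ≤ (deriv g t - deriv g 1) / (t - 1) := by
    intro t ht hd
    have : dist t 1 < r := by
      rw [Real.dist_eq]; exact lt_of_le_of_lt hd hη₀r
    have := hball this (by simpa using ht)
    rwa [slope_def_field] at this
  have hg'up : ∀ t : ℝ, 1 < t → t ≤ 1 + η₀ → t - 1 ≤ deriv g t := by
    intro t h1 h2
    have ht1 : (0:ℝ) < t - 1 := by linarith
    have := hslope_ge t (by linarith) (by rw [abs_of_pos ht1]; linarith)
    rw [hg1', sub_zero, le_div_iff₀ ht1, one_mul] at this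
    linarith
  have hg'lo : ∀ t : ℝ, 1 - η₀ ≤ t → t < 1 → deriv g t ≤ t - 1 := by
    intro t h1 h2
    have ht1 : t - 1 < 0 := by linarith
    have := hslope_ge t (by linarith) (by rw [abs_of_neg ht1]; linarith)
    rw [hg1', sub_zero, le_div_iff_of_neg ht1, one_mul] at this
    linarith
  -- quadratic lower bound for g on [1-η₀, 1+η₀]
  have hIccO : Set.Icc (1 - η₀) (1 + η₀) ⊆ O := fun x hx =>
    ⟨by linarith [hx.1], by linarith [hx.2]⟩
  have hquad : ∀ t ∈ Set.Icc (1 - η₀) (1 + η₀), (t - 1) ^ 2 / 2 ≤ g t := by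
    have hqderiv : ∀ t ∈ O, HasDerivAt (fun u => g u - (u - 1) ^ 2 / 2)
        (deriv g t - (t - 1)) t := by
      intro t ht
      have h1 : HasDerivAt g (deriv g t) t := (hgdiff t ht).hasDerivAt
      have h2 : HasDerivAt (fun u : ℝ => (u - 1) ^ 2 / 2) (t - 1) t := by
        have : HasDerivAt (fun u : ℝ => (u - 1) ^ 2) (2 * (t - 1)) t := by
          simpa using ((hasDerivAt_id t).sub_const 1).fun_pow 2
        simpa using this.div_const 2
      exact h1.sub h2
    have hqcont : ContinuousOn (fun u => g u - (u - 1) ^ 2 / 2) (Set.Icc (1-η₀) (1+η₀)) :=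
      fun x hx => ((hqderiv x (hIccO hx)).continuousAt).continuousWithinAt
    intro t ht
    rcases le_or_gt 1 t with h1t | h1t
    · -- monotone on [1, 1+η₀]
      have hmono : MonotoneOn (fun u => g u - (u - 1) ^ 2 / 2) (Set.Icc 1 (1 + η₀)) := by
        apply monotoneOn_of_deriv_nonneg (convex_Icc _ _)
          (hqcont.mono (Set.Icc_subset_Icc (by linarith) le_rfl))
        · intro x hx
          rw [interior_Icc] at hx
          exact ((hqderiv x (hIccO ⟨by linarith [hx.1], le_of_lt hx.2⟩)).differentiableAt).differentiableWithinAt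
        · intro x hx
          rw [interior_Icc] at hx
          rw [(hqderiv x (hIccO ⟨by linarith [hx.1], le_of_lt hx.2⟩)).deriv]
          have := hg'up x hx.1 (le_of_lt hx.2)
          linarith
      have := hmono (Set.mem_Icc.2 ⟨le_rfl, by linarith⟩)
        (Set.mem_Icc.2 ⟨h1t, ht.2⟩) h1t
      simp only [hg1] at this
      simpa using this
    · -- antitone on [1-η₀, 1]
      have hanti : AntitoneOn (fun u => g u - (u - 1) ^ 2 / 2) (Set.Icc (1 - η₀) 1) := by
        apply antitoneOn_of_deriv_nonpos (convex_Icc _ _)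
          (hqcont.mono (Set.Icc_subset_Icc le_rfl (by linarith)))
        · intro x hx
          rw [interior_Icc] at hx
          exact ((hqderiv x (hIccO ⟨le_of_lt hx.1, by linarith [hx.2]⟩)).differentiableAt).differentiableWithinAt
        · intro x hx
          rw [interior_Icc] at hx
          rw [(hqderiv x (hIccO ⟨le_of_lt hx.1, by linarith [hx.2]⟩)).deriv]
          have := hg'lo x (le_of_lt hx.1) hx.2
          linarith
      have := hanti (Set.mem_Icc.2 ⟨ht.1, le_of_lt h1t⟩)
        (Set.mem_Icc.2 ⟨by linarith, le_rfl⟩) (le_of_lt h1t)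
      simp only [hg1] at this
      simpa using this
  have hf1 : f 1 = 0 := by
    rw [hfg 1 h1O, hg1, EReal.coe_zero]
  -- now the main bound
  refine ⟨η₀, hη₀pos, fun η hη hηle t ht => ?_⟩
  have hfIcc : ∀ u ∈ Set.Icc (1 - η₀) (1 + η₀), ((u - 1) ^ 2 / 2 : ℝ) ≤ (f u).toReal ∧
      f u = ((g u : ℝ) : EReal) := by
    intro u hu
    have : f u = (g u : EReal) := hfg u (hIccO hu)
    exact ⟨by rw [this]; simpa using hquad u hu, this⟩
  rcases le_or_gt (|t - 1|) η with hcase | hcase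
  · -- |t-1| ≤ η : RHS is 0, need f t ≥ 0
    have h0 : max (|t - 1| - η) 0 = 0 := max_eq_right (by linarith)
    rw [h0, mul_zero, EReal.coe_zero]
    have htmem : t ∈ Set.Icc (1 - η₀) (1 + η₀) := by
      rw [abs_le] at hcase
      constructor <;> linarith [hcase.1, hcase.2]
    rw [(hfIcc t htmem).2]
    have := hquad t htmem
    exact_mod_cast le_trans (by positivity) this
  · rcases lt_or_ge 1 t with h1t | h1t
    · -- t > 1 + η
      have htgt : 1 + η < t := by
        rw [abs_of_pos (by linarith)] at hcase; linarith
      set lam : ℝ := η / (t - 1) with hlam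
      have ht1 : (0:ℝ) < t - 1 := by linarith
      have hlam0 : 0 < lam := div_pos hη ht1
      have hlam1 : lam < 1 := (div_lt_one ht1).2 (by linarith)
      have hconv := hf.convex 1 t (1 - lam) lam (by linarith) (le_of_lt hlam0) (by ring)
      have harg : (1 - lam) * 1 + lam * t = 1 + η := by
        have h' : lam * (t - 1) = η := by rw [hlam]; exact div_mul_cancel₀ η (ne_of_gt ht1)
        linear_combination h'
      rw [harg, hf1, mul_zero, zero_add] at hconv
      have hmem : (1 + η) ∈ Set.Icc (1 - η₀) (1 + η₀) := ⟨by linarith, by linarith⟩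
      have hg1η : (η ^ 2 / 2 : ℝ) ≤ g (1 + η) := by
        have := hquad (1 + η) hmem
        simpa using this
      rw [(hfIcc (1 + η) hmem).2] at hconv
      -- conclude by cases on f t
      rcases ereal_cases (f t) with hft | ⟨v, hft⟩ | hft
      · rw [hft, EReal.coe_mul_bot_of_pos (by exact_mod_cast hlam0)] at hconv
        exact absurd hconv (by simp)
      · rw [hft, ← EReal.coe_mul, EReal.coe_le_coe_iff] at hconv
        rw [hft, EReal.coe_le_coe_iff]
        have hv : η ^ 2 / 2 ≤ lam * v := le_trans hg1η hconv
        have hv2 : η * (t - 1) / 2 ≤ v := by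
          have h3 := mul_le_mul_of_nonneg_right hv (le_of_lt ht1)
          rw [hlam] at h3
          have h4 : η / (t - 1) * v * (t - 1) = η * v := by field_simp
          rw [h4] at h3
          nlinarith
        have hmax : max (|t - 1| - η) 0 = t - 1 - η := by
          rw [abs_of_pos ht1]; exact max_eq_left (by linarith)
        rw [hmax]
        nlinarith
      · rw [hft]; exact le_top
    · -- t < 1 - η (t ≥ 0)
      have htlt : t < 1 - η := by
        rw [abs_of_nonpos (by linarith)] at hcase; linarith
      set lam : ℝ := η / (1 - t) with hlam
      have ht1 : (0:ℝ) < 1 - t := by linarith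
      have hlam0 : 0 < lam := div_pos hη ht1
      have hlam1 : lam < 1 := (div_lt_one ht1).2 (by linarith)
      have hconv := hf.convex 1 t (1 - lam) lam (by linarith) (le_of_lt hlam0) (by ring)
      have harg : (1 - lam) * 1 + lam * t = 1 - η := by
        have h' : lam * (1 - t) = η := by rw [hlam]; exact div_mul_cancel₀ η (ne_of_gt ht1)
        linear_combination (-1 : ℝ) * h'
      rw [harg, hf1, mul_zero, zero_add] at hconv
      have hmem : (1 - η) ∈ Set.Icc (1 - η₀) (1 + η₀) := ⟨by linarith, by linarith⟩
      have hg1η : (η ^ 2 / 2 : ℝ) ≤ g (1 - η) := by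
        have := hquad (1 - η) hmem
        have h2 : ((1 - η) - 1) ^ 2 = η ^ 2 := by ring
        rw [h2] at this; exact this
      rw [(hfIcc (1 - η) hmem).2] at hconv
      rcases ereal_cases (f t) with hft | ⟨v, hft⟩ | hft
      · rw [hft, EReal.coe_mul_bot_of_pos (by exact_mod_cast hlam0)] at hconv
        exact absurd hconv (by simp)
      · rw [hft, ← EReal.coe_mul, EReal.coe_le_coe_iff] at hconv
        rw [hft, EReal.coe_le_coe_iff]
        have hv : η ^ 2 / 2 ≤ lam * v := le_trans hg1η hconv
        have hv2 : η * (1 - t) / 2 ≤ v := by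
          have h3 := mul_le_mul_of_nonneg_right hv (le_of_lt ht1)
          rw [hlam] at h3
          have h4 : η / (1 - t) * v * (1 - t) = η * v := by field_simp
          rw [h4] at h3
          nlinarith
        have hmax : max (|t - 1| - η) 0 = 1 - t - η := by
          rw [abs_of_nonpos (by linarith)]
          refine max_eq_left (by linarith) |>.trans (by ring)
        rw [hmax]
        nlinarith
      · rw [hft]; exact le_top

lemma uniform_mem_simplexBall {f : ℝ → EReal} (hf : IsDivergenceFn f) {ρ : ℝ} (hρ : 0 < ρ)
    {n : ℕ} (hn : 1 ≤ n) : (fun _ : Fin n => (n : ℝ)⁻¹) ∈ simplexBall f n ρ := by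
  have hn0 : (0:ℝ) < n := by exact_mod_cast hn
  refine ⟨fun i => by positivity, ?_, ?_⟩
  · simp [Finset.sum_const, Finset.card_univ]
    field_simp
  · have : ∀ i : Fin n, f ((n : ℝ) * (n : ℝ)⁻¹) = 0 := fun i => by
      rw [mul_inv_cancel₀ (ne_of_gt hn0)]; exact hf.one_eq_zero
    rw [Finset.sum_congr rfl (fun i _ => this i)]
    rw [Finset.sum_const, smul_zero]
    exact_mod_cast hρ.le

lemma simplexBall_dev_bound {f : ℝ → EReal} {ρ η₀ : ℝ}
    (hlb : ∀ η : ℝ, 0 < η → η ≤ η₀ → ∀ t : ℝ, 0 ≤ t →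
      ((η / 2 * max (|t - 1| - η) 0 : ℝ) : EReal) ≤ f t)
    {n : ℕ} {η : ℝ} (hη : 0 < η) (hηle : η ≤ η₀)
    {p : Fin n → ℝ} (hp : p ∈ simplexBall f n ρ) :
    ∑ i, max (|(n : ℝ) * p i - 1| - η) 0 ≤ 2 * ρ / η := by
  obtain ⟨hp0, hp1, hpf⟩ := hp
  have h1 : ∀ i : Fin n, ((η / 2 * max (|(n : ℝ) * p i - 1| - η) 0 : ℝ) : EReal)
      ≤ f ((n : ℝ) * p i) := fun i =>
    hlb η hη hηle _ (mul_nonneg (Nat.cast_nonneg n) (hp0 i))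
  have h2 : ((∑ i, η / 2 * max (|(n : ℝ) * p i - 1| - η) 0 : ℝ) : EReal) ≤ (ρ : EReal) := by
    rw [ereal_coe_sum]
    exact le_trans (Finset.sum_le_sum fun i _ => h1 i) hpf
  rw [EReal.coe_le_coe_iff, ← Finset.mul_sum] at h2
  rw [div_mul_eq_mul_div, div_le_iff₀ (by norm_num : (0:ℝ) < 2)] at h2
  rw [le_div_iff₀ hη]
  nlinarith

lemma abs_dot_sub_mean_le {n : ℕ} (hn : 1 ≤ n) {η ρ W : ℝ} (hη : 0 < η) (hW0 : 0 ≤ W)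
    {p z w : Fin n → ℝ} (hp0 : ∀ i, 0 ≤ p i) (hp1 : ∑ i, p i = 1)
    (hm : ∑ i, max (|(n : ℝ) * p i - 1| - η) 0 ≤ 2 * ρ / η)
    (hzw : ∀ i, |z i| ≤ w i) (hW : ∀ i, w i ≤ W) :
    |∑ i, p i * z i - (∑ i, z i) / n| ≤ η * (∑ i, w i) / n + 2 * ρ / η * W / n := by
  have hn0 : (0:ℝ) < n := by exact_mod_cast hn
  have hw0 : ∀ i, 0 ≤ w i := fun i => le_trans (abs_nonneg _) (hzw i)
  have hkey : ∑ i, p i * z i - (∑ i, z i) / n = ∑ i, (p i - (n:ℝ)⁻¹) * z i := by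
    rw [Finset.sum_div, ← Finset.sum_sub_distrib]
    exact Finset.sum_congr rfl fun i _ => by ring
  rw [hkey]
  calc |∑ i, (p i - (n:ℝ)⁻¹) * z i| ≤ ∑ i, |(p i - (n:ℝ)⁻¹) * z i| :=
        Finset.abs_sum_le_sum_abs _ _
    _ ≤ ∑ i, (η + max (|(n : ℝ) * p i - 1| - η) 0) / n * w i := by
        apply Finset.sum_le_sum
        intro i _
        rw [abs_mul]
        have h1 : |p i - (n:ℝ)⁻¹| = |(n : ℝ) * p i - 1| / n := by
          rw [eq_div_iff (ne_of_gt hn0), ← abs_of_pos hn0, ← abs_mul]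
          congr 1
          field_simp
          rw [abs_of_pos hn0]
          ring
        have h2 : |(n : ℝ) * p i - 1| ≤ η + max (|(n : ℝ) * p i - 1| - η) 0 := by
          rcases le_or_gt (|(n : ℝ) * p i - 1|) η with h | h
          · have : max (|(n : ℝ) * p i - 1| - η) 0 = 0 := max_eq_right (by linarith)
            rw [this]; linarith
          · have : max (|(n : ℝ) * p i - 1| - η) 0 = |(n : ℝ) * p i - 1| - η :=
              max_eq_left (by linarith)
            rw [this]; linarith
        rw [h1]
        apply mul_le_mul _ (hzw i) (abs_nonneg _) (by positivity)
        gcongr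
    _ ≤ η * (∑ i, w i) / n + 2 * ρ / η * W / n := by
        have hexp : ∀ i : Fin n, (η + max (|(n : ℝ) * p i - 1| - η) 0) / n * w i
            = η * w i / n + max (|(n : ℝ) * p i - 1| - η) 0 * w i / n := by
          intro i; ring
        rw [Finset.sum_congr rfl fun i _ => hexp i, Finset.sum_add_distrib]
        have hA : ∑ i, η * w i / n = η * (∑ i, w i) / n := by
          rw [Finset.mul_sum, Finset.sum_div]
        have hB : ∑ i, max (|(n : ℝ) * p i - 1| - η) 0 * w i / n ≤ 2 * ρ / η * W / n := by
          have : ∑ i, max (|(n : ℝ) * p i - 1| - η) 0 * w i / n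
              ≤ ∑ i, max (|(n : ℝ) * p i - 1| - η) 0 * W / n := by
            apply Finset.sum_le_sum
            intro i _
            rw [div_le_div_iff_of_pos_right hn0]
            exact mul_le_mul_of_nonneg_left (hW i) (le_max_right _ 0)
          refine this.trans ?_
          rw [← Finset.sum_div, ← Finset.sum_mul, div_le_div_iff_of_pos_right hn0]
          exact mul_le_mul_of_nonneg_right hm hW0
        rw [hA]
        linarith
lemma hatF_sub_mean_abs_le {f : ℝ → EReal} (hf : IsDivergenceFn f) {ρ η₀ : ℝ} (hρ : 0 < ρ)
    (hlb : ∀ η : ℝ, 0 < η → η ≤ η₀ → ∀ t : ℝ, 0 ≤ t →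
      ((η / 2 * max (|t - 1| - η) 0 : ℝ) : EReal) ≤ f t)
    {n : ℕ} (hn : 1 ≤ n) {η : ℝ} (hη : 0 < η) (hηle : η ≤ η₀)
    (z w : Fin n → ℝ) (hzw : ∀ i, |z i| ≤ w i) {W : ℝ} (hW0 : 0 ≤ W) (hW : ∀ i, w i ≤ W) :
    |sSup ((fun p : Fin n → ℝ => ∑ i, p i * z i) '' simplexBall f n ρ) - (∑ i, z i) / n|
      ≤ η * (∑ i, w i) / n + 2 * ρ / η * W / n := by
  have hn0 : (0:ℝ) < n := by exact_mod_cast hn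
  set B := η * (∑ i, w i) / n + 2 * ρ / η * W / n with hB
  set m := (∑ i, z i) / n with hmdef
  have hub : ∀ v ∈ (fun p : Fin n → ℝ => ∑ i, p i * z i) '' simplexBall f n ρ,
      v ≤ m + B := by
    rintro v ⟨p, hp, rfl⟩
    have := abs_dot_sub_mean_le hn hη hW0 hp.1 hp.2.1
      (simplexBall_dev_bound hlb hη hηle hp) hzw hW
    rw [abs_le] at this
    rw [← hB, ← hmdef] at this
    linarith [this.2]
  have hmem : m ∈ (fun p : Fin n → ℝ => ∑ i, p i * z i) '' simplexBall f n ρ := by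
    refine ⟨fun _ => (n:ℝ)⁻¹, uniform_mem_simplexBall hf hρ hn, ?_⟩
    rw [hmdef, Finset.sum_div]
    exact Finset.sum_congr rfl fun i _ => by ring
  have hne : ((fun p : Fin n → ℝ => ∑ i, p i * z i) '' simplexBall f n ρ).Nonempty :=
    ⟨m, hmem⟩
  have hbdd : BddAbove ((fun p : Fin n → ℝ => ∑ i, p i * z i) '' simplexBall f n ρ) :=
    ⟨m + B, hub⟩
  have h1 : sSup ((fun p : Fin n → ℝ => ∑ i, p i * z i) '' simplexBall f n ρ) ≤ m + B :=
    csSup_le hne hub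
  have h2 : m ≤ sSup ((fun p : Fin n → ℝ => ∑ i, p i * z i) '' simplexBall f n ρ) :=
    le_csSup hbdd hmem
  have hB0 : 0 ≤ B := by
    have : 0 ≤ η * (∑ i, w i) / n := by
      apply div_nonneg _ hn0.le
      apply mul_nonneg hη.le
      exact Finset.sum_nonneg fun i _ => le_trans (abs_nonneg _) (hzw i)
    have h2' : 0 ≤ 2 * ρ / η * W / n := by positivity
    linarith
  rw [abs_le]
  constructor <;> linarith

lemma exists_countable_dense_subset' {E : Type*} [TopologicalSpace E]
    [SecondCountableTopology E]
    (A : Set E) : ∃ D : Set E, D ⊆ A ∧ D.Countable ∧ A ⊆ closure D := by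
  obtain ⟨s, hsc, hsd⟩ := TopologicalSpace.exists_countable_dense (↥A)
  refine ⟨Subtype.val '' s, by rintro x ⟨y, _, rfl⟩; exact y.2, hsc.image _, ?_⟩
  intro a ha
  have : (⟨a, ha⟩ : ↥A) ∈ closure s := hsd _
  rwa [closure_subtype] at this

lemma csSup_image_eq_of_dense {E : Type*} [MetricSpace E] {h : E → ℝ} {A D : Set E}
    (hc : ContinuousOn h A) (hDA : D ⊆ A) (hAD : A ⊆ closure D) (hne : A.Nonempty)
    (hbdd : BddAbove (h '' A)) : sSup (h '' D) = sSup (h '' A) := by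
  have hDne : D.Nonempty := by
    rcases hne with ⟨a, ha⟩
    exact closure_nonempty_iff.1 ⟨a, hAD ha⟩
  apply le_antisymm
  · exact csSup_le_csSup hbdd (hDne.image _) (Set.image_mono hDA)
  · apply csSup_le (hne.image _)
    rintro v ⟨a, ha, rfl⟩
    have h2 : ContinuousWithinAt h D a := (hc a ha).mono hDA
    have h3 : (nhdsWithin a D).NeBot := mem_closure_iff_nhdsWithin_neBot.1 (hAD ha)
    apply le_of_tendsto h2
    exact eventually_mem_nhdsWithin.mono fun y hy =>
      le_csSup (hbdd.mono (Set.image_mono hDA)) ⟨y, hy, rfl⟩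

lemma csInf_image_eq_of_dense {E : Type*} [MetricSpace E] {h : E → ℝ} {A D : Set E}
    (hc : ContinuousOn h A) (hDA : D ⊆ A) (hAD : A ⊆ closure D) (hne : A.Nonempty)
    (hbdd : BddBelow (h '' A)) : sInf (h '' D) = sInf (h '' A) := by
  have hDne : D.Nonempty := by
    rcases hne with ⟨a, ha⟩
    exact closure_nonempty_iff.1 ⟨a, hAD ha⟩
  apply le_antisymm
  · apply le_csInf (hne.image _)
    rintro v ⟨a, ha, rfl⟩
    have h2 : ContinuousWithinAt h D a := (hc a ha).mono hDA
    have h3 : (nhdsWithin a D).NeBot := mem_closure_iff_nhdsWithin_neBot.1 (hAD ha)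
    apply ge_of_tendsto h2
    exact eventually_mem_nhdsWithin.mono fun y hy =>
      csInf_le (hbdd.mono (Set.image_mono hDA)) ⟨y, hy, rfl⟩
  · exact csInf_le_csInf hbdd (hDne.image _) (Set.image_mono hDA)

lemma slln_comp {S Ω : Type*} [MeasurableSpace S] [MeasurableSpace Ω] (μ : Measure Ω)
    [IsProbabilityMeasure μ] (P₀ : Measure S) (Z : ℕ → Ω → S) (hZ : ∀ i, Measurable (Z i))
    (hindep : iIndepFun Z μ)
    (hlaw : ∀ i, Measure.map (Z i) μ = P₀)
    (g : S → ℝ) (hg : Measurable g) (hgint : Integrable g P₀) :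
    ∀ᵐ ω ∂μ, Tendsto (fun n : ℕ => (∑ i ∈ Finset.range n, g (Z i ω)) / n) atTop
      (nhds (∫ s, g s ∂P₀)) := by
  have hint0 : Integrable (fun ω => g (Z 0 ω)) μ := by
    rw [← hlaw 0] at hgint
    exact (integrable_map_measure hg.aestronglyMeasurable (hZ 0).aemeasurable).1 hgint
  have hpind : Pairwise (Function.onFun (IndepFun · · μ) fun i ω => g (Z i ω)) := fun i j hij =>
    (hindep.indepFun hij).comp hg hg
  have hident : ∀ i, IdentDistrib (fun ω => g (Z i ω)) (fun ω => g (Z 0 ω)) μ μ := fun i =>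
    IdentDistrib.comp ⟨(hZ i).aemeasurable, (hZ 0).aemeasurable, by rw [hlaw i, hlaw 0]⟩ hg
  have hmean : μ[fun ω => g (Z 0 ω)] = ∫ s, g s ∂P₀ := by
    rw [← hlaw 0]
    exact (integral_map (hZ 0).aemeasurable hg.aestronglyMeasurable).symm
  have := strong_law_ae_real (fun i ω => g (Z i ω)) hint0 hpind hident
  rw [hmean] at this
  exact this

lemma abs_sInf_image_sub_le {E : Type*} {X : Set E} {F G : E → ℝ} {c : ℝ}
    {y₀ : E} (hy₀ : y₀ ∈ X) (hmin : ∀ y ∈ X, F y₀ ≤ F y)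
    (h : ∀ x ∈ X, |G x - F x| ≤ c) : |sInf (G '' X) - sInf (F '' X)| ≤ c := by
  have hXne : X.Nonempty := ⟨y₀, hy₀⟩
  have hc : 0 ≤ c := le_trans (abs_nonneg _) (h y₀ hy₀)
  have hF : sInf (F '' X) = F y₀ := by
    apply le_antisymm
    · exact csInf_le ⟨F y₀, by rintro v ⟨y, hy, rfl⟩; exact hmin y hy⟩ ⟨y₀, hy₀, rfl⟩
    · exact le_csInf (hXne.image _) (by rintro v ⟨y, hy, rfl⟩; exact hmin y hy)
  have hGbdd : BddBelow (G '' X) := by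
    refine ⟨F y₀ - c, ?_⟩
    rintro v ⟨y, hy, rfl⟩
    have h1 := (abs_le.1 (h y hy)).1
    have h2 := hmin y hy
    linarith
  have hG1 : F y₀ - c ≤ sInf (G '' X) := by
    apply le_csInf (hXne.image _)
    rintro v ⟨y, hy, rfl⟩
    have h1 := (abs_le.1 (h y hy)).1
    have h2 := hmin y hy
    linarith
  have hG2 : sInf (G '' X) ≤ F y₀ + c := by
    refine le_trans (csInf_le hGbdd ⟨y₀, hy₀, rfl⟩) ?_
    have := (abs_le.1 (h y₀ hy₀)).2
    linarith
  rw [hF, abs_le]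
  constructor <;> linarith

lemma argmin_stability {d : ℕ} {X : Set (Fin d → ℝ)} (hXc : IsCompact X) (hXne : X.Nonempty)
    {F : (Fin d → ℝ) → ℝ} (hFcont : ContinuousOn F X) {δ : ℝ} (hδ : 0 < δ) :
    ∃ c : ℝ, 0 < c ∧ ∀ G : (Fin d → ℝ) → ℝ, (∀ x ∈ X, |G x - F x| ≤ c) →
      sSup ((fun x => Metric.infDist x {y ∈ X | ∀ y' ∈ X, F y ≤ F y'}) ''
        {x ∈ X | ∀ x' ∈ X, G x ≤ G x'}) < δ := by
  obtain ⟨y₀, hy₀X, hy₀min'⟩ := hXc.exists_isMinOn hXne hFcont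
  have hy₀min : ∀ y ∈ X, F y₀ ≤ F y := fun y hy => hy₀min' hy
  set Sstar := {y ∈ X | ∀ y' ∈ X, F y ≤ F y'} with hSdef
  have hy₀S : y₀ ∈ Sstar := ⟨hy₀X, hy₀min⟩
  have hSchar : ∀ y, y ∈ Sstar ↔ y ∈ X ∧ F y ≤ F y₀ := by
    intro y
    constructor
    · rintro ⟨hyX, hymin⟩; exact ⟨hyX, hymin y₀ hy₀X⟩
    · rintro ⟨hyX, hyle⟩; exact ⟨hyX, fun y' hy' => le_trans hyle (hy₀min y' hy')⟩
  set K := X ∩ (fun x => Metric.infDist x Sstar) ⁻¹' (Set.Ici (δ/2)) with hKdef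
  have hKc : IsCompact K :=
    hXc.inter_right (isClosed_Ici.preimage (Metric.continuous_infDist_pt Sstar))
  rcases Set.eq_empty_or_nonempty K with hK | hK
  · refine ⟨1, one_pos, fun G hG => ?_⟩
    have hle : sSup ((fun x => Metric.infDist x Sstar) '' {x ∈ X | ∀ x' ∈ X, G x ≤ G x'})
        ≤ δ/2 := by
      apply Real.sSup_le
      · rintro v ⟨x₀, ⟨hx₀X, _⟩, rfl⟩
        by_contra hcon
        push_neg at hcon
        have : x₀ ∈ K := ⟨hx₀X, le_of_lt hcon⟩
        rw [hK] at this
        exact this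
      · linarith
    linarith
  · obtain ⟨y₁, hy₁K, hy₁min'⟩ := hKc.exists_isMinOn hK (hFcont.mono Set.inter_subset_left)
    have hy₁min : ∀ y ∈ K, F y₁ ≤ F y := fun y hy => hy₁min' hy
    have hy₁X : y₁ ∈ X := hy₁K.1
    have hy₁not : y₁ ∉ Sstar := by
      intro hmem
      have h0 : Metric.infDist y₁ Sstar = 0 := Metric.infDist_zero_of_mem hmem
      have := hy₁K.2
      simp only [Set.mem_preimage, Set.mem_Ici] at this
      rw [h0] at this
      linarith
    have hm : F y₀ < F y₁ := by
      rcases lt_or_ge (F y₀) (F y₁) with h | h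
      · exact h
      · exact absurd ((hSchar y₁).2 ⟨hy₁X, h⟩) hy₁not
    refine ⟨(F y₁ - F y₀) / 3, by linarith, fun G hG => ?_⟩
    have hle : sSup ((fun x => Metric.infDist x Sstar) '' {x ∈ X | ∀ x' ∈ X, G x ≤ G x'})
        ≤ δ/2 := by
      apply Real.sSup_le
      · rintro v ⟨x₀, ⟨hx₀X, hx₀min⟩, rfl⟩
        by_contra hcon
        push_neg at hcon
        have hx₀K : x₀ ∈ K := ⟨hx₀X, le_of_lt hcon⟩
        have h1 : F y₁ ≤ F x₀ := hy₁min x₀ hx₀K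
        have h2 : G x₀ ≤ G y₀ := hx₀min y₀ hy₀X
        have h3 := abs_le.1 (hG x₀ hx₀X)
        have h4 := abs_le.1 (hG y₀ hy₀X)
        linarith [h3.1, h4.2]
      · linarith
    linarith

section BallSup
variable {S : Type*} [MeasurableSpace S] {d : ℕ} {X : Set (Fin d → ℝ)}
  {ℓ : (Fin d → ℝ) → S → ℝ} {Zbar : S → ℝ}

lemma ballSup_props (hmeas : Measurable fun q : (Fin d → ℝ) × S => ℓ q.1 q.2)
    (hcont : ∀ s, ContinuousOn (fun x => ℓ x s) X)
    (henv : ∀ x ∈ X, ∀ s, |ℓ x s| ≤ Zbar s)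
    {x : Fin d → ℝ} (hx : x ∈ X) {r : ℝ} (hr : 0 < r) :
    Measurable (fun s => sSup ((fun y => ℓ y s) '' (Metric.ball x r ∩ X))) ∧
    (∀ s, ∀ y ∈ Metric.ball x r ∩ X, ℓ y s ≤ sSup ((fun y => ℓ y s) '' (Metric.ball x r ∩ X))) ∧
    (∀ s, |sSup ((fun y => ℓ y s) '' (Metric.ball x r ∩ X))| ≤ Zbar s) := by
  set A := Metric.ball x r ∩ X with hA
  have hxA : x ∈ A := ⟨Metric.mem_ball_self hr, hx⟩
  have hAne : A.Nonempty := ⟨x, hxA⟩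
  have hmeasy : ∀ y : Fin d → ℝ, Measurable (fun s => ℓ y s) := fun y =>
    hmeas.comp (measurable_const.prodMk measurable_id)
  have hbdd : ∀ s, BddAbove ((fun y => ℓ y s) '' A) := fun s =>
    ⟨Zbar s, by rintro v ⟨y, hy, rfl⟩; exact le_trans (le_abs_self _) (henv y hy.2 s)⟩
  have hle : ∀ s, ∀ y ∈ A, ℓ y s ≤ sSup ((fun y => ℓ y s) '' A) := fun s y hy =>
    le_csSup (hbdd s) ⟨y, hy, rfl⟩
  have habs : ∀ s, |sSup ((fun y => ℓ y s) '' A)| ≤ Zbar s := by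
    intro s
    rw [abs_le]
    constructor
    · refine le_trans ?_ (hle s x hxA)
      refine le_trans (neg_le_neg (henv x hx s)) ?_
      rw [neg_le]
      exact le_trans (neg_le_abs _) le_rfl
    · exact csSup_le (hAne.image _)
        (by rintro v ⟨y, hy, rfl⟩; exact le_trans (le_abs_self _) (henv y hy.2 s))
  obtain ⟨D, hDA, hDc, hAD⟩ := exists_countable_dense_subset' A
  have heq : (fun s => sSup ((fun y => ℓ y s) '' A))
      = fun s => sSup ((fun y => ℓ y s) '' D) := by
    funext s
    exact (csSup_image_eq_of_dense ((hcont s).mono (by rw [hA]; exact Set.inter_subset_right))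
      hDA hAD hAne (hbdd s)).symm
  refine ⟨?_, hle, habs⟩
  rw [heq]
  exact Measurable.sSup hDc fun y _ => hmeasy y

lemma ballInf_props (hmeas : Measurable fun q : (Fin d → ℝ) × S => ℓ q.1 q.2)
    (hcont : ∀ s, ContinuousOn (fun x => ℓ x s) X)
    (henv : ∀ x ∈ X, ∀ s, |ℓ x s| ≤ Zbar s)
    {x : Fin d → ℝ} (hx : x ∈ X) {r : ℝ} (hr : 0 < r) :
    Measurable (fun s => sInf ((fun y => ℓ y s) '' (Metric.ball x r ∩ X))) ∧
    (∀ s, ∀ y ∈ Metric.ball x r ∩ X, sInf ((fun y => ℓ y s) '' (Metric.ball x r ∩ X)) ≤ ℓ y s) ∧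
    (∀ s, |sInf ((fun y => ℓ y s) '' (Metric.ball x r ∩ X))| ≤ Zbar s) := by
  set A := Metric.ball x r ∩ X with hA
  have hxA : x ∈ A := ⟨Metric.mem_ball_self hr, hx⟩
  have hAne : A.Nonempty := ⟨x, hxA⟩
  have hmeasy : ∀ y : Fin d → ℝ, Measurable (fun s => ℓ y s) := fun y =>
    hmeas.comp (measurable_const.prodMk measurable_id)
  have hbdd : ∀ s, BddBelow ((fun y => ℓ y s) '' A) := fun s =>
    ⟨-Zbar s, by rintro v ⟨y, hy, rfl⟩; exact neg_le_of_abs_le (henv y hy.2 s)⟩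
  have hle : ∀ s, ∀ y ∈ A, sInf ((fun y => ℓ y s) '' A) ≤ ℓ y s := fun s y hy =>
    csInf_le (hbdd s) ⟨y, hy, rfl⟩
  have habs : ∀ s, |sInf ((fun y => ℓ y s) '' A)| ≤ Zbar s := by
    intro s
    rw [abs_le]
    constructor
    · refine le_csInf (hAne.image _) ?_
      rintro v ⟨y, hy, rfl⟩
      exact neg_le_of_abs_le (henv y hy.2 s)
    · refine le_trans (hle s x hxA) ?_
      exact le_trans (le_abs_self _) (henv x hx s)
  obtain ⟨D, hDA, hDc, hAD⟩ := exists_countable_dense_subset' A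
  have heq : (fun s => sInf ((fun y => ℓ y s) '' A))
      = fun s => sInf ((fun y => ℓ y s) '' D) := by
    funext s
    exact (csInf_image_eq_of_dense ((hcont s).mono (by rw [hA]; exact Set.inter_subset_right))
      hDA hAD hAne (hbdd s)).symm
  refine ⟨?_, hle, habs⟩
  rw [heq]
  exact Measurable.sInf hDc fun y _ => hmeasy y

end BallSup

lemma cover_choice {S : Type*} [MeasurableSpace S] (P₀ : Measure S) [IsProbabilityMeasure P₀]
    {d : ℕ} {X : Set (Fin d → ℝ)} {ℓ : (Fin d → ℝ) → S → ℝ} {Zbar : S → ℝ}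
    (hmeas : Measurable fun q : (Fin d → ℝ) × S => ℓ q.1 q.2)
    (hcont : ∀ s, ContinuousOn (fun x => ℓ x s) X)
    (henv : ∀ x ∈ X, ∀ s, |ℓ x s| ≤ Zbar s)
    (hZbarInt : Integrable Zbar P₀)
    {x : Fin d → ℝ} (hx : x ∈ X) {γ : ℝ} (hγ : 0 < γ) :
    ∃ k : ℕ,
      (∫ s, sSup ((fun y => ℓ y s) '' (Metric.ball x (1/(k+1)) ∩ X)) ∂P₀
        ≤ (∫ s, ℓ x s ∂P₀) + γ) ∧
      ((∫ s, ℓ x s ∂P₀) - γ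
        ≤ ∫ s, sInf ((fun y => ℓ y s) '' (Metric.ball x (1/(k+1)) ∩ X)) ∂P₀) := by
  have hrk : ∀ k : ℕ, (0:ℝ) < 1/(k+1) := fun k => by positivity
  have propsU := fun k : ℕ => ballSup_props hmeas hcont henv hx (hrk k)
  have propsI := fun k : ℕ => ballInf_props hmeas hcont henv hx (hrk k)
  have hxA : ∀ k : ℕ, x ∈ Metric.ball x (1/(k+1)) ∩ X := fun k =>
    ⟨Metric.mem_ball_self (hrk k), hx⟩
  have hδk : ∀ δ : ℝ, 0 < δ → ∃ N : ℕ, ∀ k ≥ N, (1:ℝ)/(k+1) < δ := by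
    intro δ hδ
    obtain ⟨N, hN⟩ := exists_nat_one_div_lt hδ
    refine ⟨N, fun k hk => lt_of_le_of_lt ?_ hN⟩
    apply one_div_le_one_div_of_le (by positivity)
    exact_mod_cast by omega
  have hptU : ∀ s, Tendsto (fun k : ℕ =>
      sSup ((fun y => ℓ y s) '' (Metric.ball x (1/(k+1)) ∩ X))) atTop (nhds (ℓ x s)) := by
    intro s
    rw [Metric.tendsto_atTop]
    intro θ hθ
    obtain ⟨δ, hδ, hδball⟩ := Metric.continuousWithinAt_iff.1 (hcont s x hx) (θ/2) (by linarith)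
    obtain ⟨N, hN⟩ := hδk δ hδ
    refine ⟨N, fun k hk => ?_⟩
    have hup : sSup ((fun y => ℓ y s) '' (Metric.ball x (1/(k+1)) ∩ X)) ≤ ℓ x s + θ/2 := by
      apply csSup_le (Set.Nonempty.image _ ⟨x, hxA k⟩)
      rintro v ⟨y, hy, rfl⟩
      have hdist : dist y x < δ := lt_of_lt_of_le hy.1 (le_of_lt (hN k hk))
      have h2 := hδball hy.2 hdist
      rw [Real.dist_eq] at h2
      have := (abs_lt.1 h2).2
      linarith
    have hlo : ℓ x s ≤ sSup ((fun y => ℓ y s) '' (Metric.ball x (1/(k+1)) ∩ X)) :=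
      (propsU k).2.1 s x (hxA k)
    rw [Real.dist_eq, abs_lt]
    constructor <;> linarith
  have hptI : ∀ s, Tendsto (fun k : ℕ =>
      sInf ((fun y => ℓ y s) '' (Metric.ball x (1/(k+1)) ∩ X))) atTop (nhds (ℓ x s)) := by
    intro s
    rw [Metric.tendsto_atTop]
    intro θ hθ
    obtain ⟨δ, hδ, hδball⟩ := Metric.continuousWithinAt_iff.1 (hcont s x hx) (θ/2) (by linarith)
    obtain ⟨N, hN⟩ := hδk δ hδ
    refine ⟨N, fun k hk => ?_⟩
    have hup : ℓ x s - θ/2 ≤ sInf ((fun y => ℓ y s) '' (Metric.ball x (1/(k+1)) ∩ X)) := by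
      apply le_csInf (Set.Nonempty.image _ ⟨x, hxA k⟩)
      rintro v ⟨y, hy, rfl⟩
      have hdist : dist y x < δ := lt_of_lt_of_le hy.1 (le_of_lt (hN k hk))
      have h2 := hδball hy.2 hdist
      rw [Real.dist_eq] at h2
      have := (abs_lt.1 h2).1
      linarith
    have hlo : sInf ((fun y => ℓ y s) '' (Metric.ball x (1/(k+1)) ∩ X)) ≤ ℓ x s :=
      (propsI k).2.1 s x (hxA k)
    rw [Real.dist_eq, abs_lt]
    constructor <;> linarith
  have hIU : Tendsto (fun k : ℕ => ∫ s, sSup ((fun y => ℓ y s) ''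
      (Metric.ball x (1/(k+1)) ∩ X)) ∂P₀) atTop (nhds (∫ s, ℓ x s ∂P₀)) := by
    apply MeasureTheory.tendsto_integral_of_dominated_convergence Zbar
      (fun k => ((propsU k).1).aestronglyMeasurable) hZbarInt
      (fun k => Filter.Eventually.of_forall fun s => by
        rw [Real.norm_eq_abs]; exact (propsU k).2.2 s)
      (Filter.Eventually.of_forall hptU)
  have hII : Tendsto (fun k : ℕ => ∫ s, sInf ((fun y => ℓ y s) ''
      (Metric.ball x (1/(k+1)) ∩ X)) ∂P₀) atTop (nhds (∫ s, ℓ x s ∂P₀)) := by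
    apply MeasureTheory.tendsto_integral_of_dominated_convergence Zbar
      (fun k => ((propsI k).1).aestronglyMeasurable) hZbarInt
      (fun k => Filter.Eventually.of_forall fun s => by
        rw [Real.norm_eq_abs]; exact (propsI k).2.2 s)
      (Filter.Eventually.of_forall hptI)
  have h1 := hIU.eventually (eventually_le_nhds (lt_add_of_pos_right _ hγ))
  have h2 := hII.eventually (eventually_ge_nhds (sub_lt_self _ hγ))
  exact (h1.and h2).exists

lemma fold_max_markov {S Ω : Type*} [MeasurableSpace S] [MeasurableSpace Ω]
    (P₀ : Measure S) [IsProbabilityMeasure P₀] (μ : Measure Ω) [IsProbabilityMeasure μ]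
    {Zbar : S → ℝ} (hZbarMeas : Measurable Zbar) (hZbarNN : ∀ s, 0 ≤ Zbar s)
    {ε : ℝ} (hε : 0 < ε) (hmom : Integrable (fun s => Zbar s ^ (1 + ε)) P₀)
    (Z : ℕ → Ω → S) (hZ : ∀ i, Measurable (Z i)) (hlaw : ∀ i, Measure.map (Z i) μ = P₀)
    {β : ℝ} (hβdef : β = ε / (2 * (1 + ε))) {κ : ℝ} (hκ : 0 < κ) :
    Tendsto (fun n : ℕ => μ {ω | κ * (n:ℝ)^((1:ℝ)-β) ≤
      (Finset.range n).fold max 0 (fun i => Zbar (Z i ω))}) atTop (nhds 0) := by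
  set m₂ := ∫ s, Zbar s ^ (1 + ε) ∂P₀ with hm₂
  have hm₂0 : 0 ≤ m₂ := integral_nonneg fun s => Real.rpow_nonneg (hZbarNN s) _
  set K := m₂ / κ ^ ((1:ℝ) + ε) with hK
  have hεp : (0:ℝ) < 1 + ε := by linarith
  have hbound : ∀ n : ℕ, 1 ≤ n → μ {ω | κ * (n:ℝ)^((1:ℝ)-β) ≤
      (Finset.range n).fold max 0 (fun i => Zbar (Z i ω))}
      ≤ ENNReal.ofReal (K * (n:ℝ) ^ (-(ε/2))) := by
    intro n hn
    have hn0 : (0:ℝ) < n := by exact_mod_cast hn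
    set t := κ * (n:ℝ)^((1:ℝ)-β) with ht
    have ht0 : 0 < t := mul_pos hκ (Real.rpow_pos_of_pos hn0 _)
    have hincl : {ω | t ≤ (Finset.range n).fold max 0 (fun i => Zbar (Z i ω))}
        ⊆ ⋃ i ∈ Finset.range n, {ω | t ≤ Zbar (Z i ω)} := by
      intro ω hω
      simp only [Set.mem_setOf_eq] at hω
      by_contra hcon
      simp only [Set.mem_iUnion, Set.mem_setOf_eq, not_exists, not_le] at hcon
      have : (Finset.range n).fold max 0 (fun i => Zbar (Z i ω)) < t :=
        (Finset.fold_max_lt t).2 ⟨ht0, fun i hi => hcon i hi⟩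
      linarith
    have hmeasset : MeasurableSet {s | t ≤ Zbar s} := hZbarMeas measurableSet_Ici
    have heach : ∀ i : ℕ, μ {ω | t ≤ Zbar (Z i ω)} = P₀ {s | t ≤ Zbar s} := by
      intro i
      have : {ω | t ≤ Zbar (Z i ω)} = Z i ⁻¹' {s | t ≤ Zbar s} := rfl
      rw [this, ← Measure.map_apply (hZ i) hmeasset, hlaw i]
    have hmarkov : P₀ {s | t ≤ Zbar s} ≤ ENNReal.ofReal (m₂ / t ^ ((1:ℝ)+ε)) := by
      have ht1 : (0:ℝ) < t ^ ((1:ℝ)+ε) := Real.rpow_pos_of_pos ht0 _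
      have hsub : {s | t ≤ Zbar s} ⊆ {s | t ^ ((1:ℝ)+ε) ≤ Zbar s ^ ((1:ℝ)+ε)} := fun s hs =>
        Real.rpow_le_rpow ht0.le hs (by linarith)
      have hmk := mul_meas_ge_le_integral_of_nonneg
        (Filter.Eventually.of_forall fun s => Real.rpow_nonneg (hZbarNN s) ((1:ℝ)+ε))
        hmom (t ^ ((1:ℝ)+ε))
      have htoReal : (P₀ {s | t ^ ((1:ℝ)+ε) ≤ Zbar s ^ ((1:ℝ)+ε)}).toReal
          ≤ m₂ / t ^ ((1:ℝ)+ε) := by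
        rw [le_div_iff₀ ht1]
        rw [measureReal_def] at hmk
        linarith [hmk]
      calc P₀ {s | t ≤ Zbar s} ≤ P₀ {s | t ^ ((1:ℝ)+ε) ≤ Zbar s ^ ((1:ℝ)+ε)} :=
            measure_mono hsub
        _ = ENNReal.ofReal ((P₀ {s | t ^ ((1:ℝ)+ε) ≤ Zbar s ^ ((1:ℝ)+ε)}).toReal) :=
            (ENNReal.ofReal_toReal (measure_ne_top _ _)).symm
        _ ≤ ENNReal.ofReal (m₂ / t ^ ((1:ℝ)+ε)) := ENNReal.ofReal_le_ofReal htoReal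
    have hexp : (n:ℝ) * (m₂ / t ^ ((1:ℝ)+ε)) = K * (n:ℝ) ^ (-(ε/2)) := by
      have hA : ((1:ℝ)-β) * ((1:ℝ)+ε) = 1 + ε/2 := by
        rw [hβdef]; field_simp; ring
      have h1 : t ^ ((1:ℝ)+ε) = κ ^ ((1:ℝ)+ε) * (n:ℝ) ^ ((1:ℝ) + ε/2) := by
        rw [ht, Real.mul_rpow hκ.le (Real.rpow_nonneg hn0.le _),
          ← Real.rpow_mul hn0.le, hA]
      have h2 : (n:ℝ) ^ (-(ε/2)) = (n:ℝ) * ((n:ℝ) ^ ((1:ℝ) + ε/2))⁻¹ := by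
        rw [← Real.rpow_neg hn0.le]
        have he : (-(ε/2) : ℝ) = 1 + (-(1 + ε/2)) := by ring
        rw [he, Real.rpow_add hn0, Real.rpow_one]
      rw [h1, hK, h2]
      have hκp : (0:ℝ) < κ ^ ((1:ℝ)+ε) := Real.rpow_pos_of_pos hκ _
      have hnp : (0:ℝ) < (n:ℝ) ^ ((1:ℝ) + ε/2) := Real.rpow_pos_of_pos hn0 _
      field_simp
    calc μ {ω | t ≤ (Finset.range n).fold max 0 (fun i => Zbar (Z i ω))}
        ≤ μ (⋃ i ∈ Finset.range n, {ω | t ≤ Zbar (Z i ω)}) := measure_mono hincl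
      _ ≤ ∑ i ∈ Finset.range n, μ {ω | t ≤ Zbar (Z i ω)} := measure_biUnion_finset_le _ _
      _ = ∑ _i ∈ Finset.range n, P₀ {s | t ≤ Zbar s} :=
          Finset.sum_congr rfl fun i _ => heach i
      _ ≤ ∑ _i ∈ Finset.range n, ENNReal.ofReal (m₂ / t ^ ((1:ℝ)+ε)) :=
          Finset.sum_le_sum fun i _ => hmarkov
      _ = (n : ENNReal) * ENNReal.ofReal (m₂ / t ^ ((1:ℝ)+ε)) := by
          rw [Finset.sum_const, Finset.card_range, nsmul_eq_mul]
      _ = ENNReal.ofReal ((n:ℝ) * (m₂ / t ^ ((1:ℝ)+ε))) := by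
          rw [ENNReal.ofReal_mul (Nat.cast_nonneg n), ENNReal.ofReal_natCast]
      _ = ENNReal.ofReal (K * (n:ℝ) ^ (-(ε/2))) := by rw [hexp]
  have hlim : Tendsto (fun n : ℕ => ENNReal.ofReal (K * (n:ℝ) ^ (-(ε/2)))) atTop (nhds 0) := by
    have h1 : Tendsto (fun n : ℕ => K * (n:ℝ) ^ (-(ε/2))) atTop (nhds (K * 0)) :=
      tendsto_const_nhds.mul
        ((tendsto_rpow_neg_atTop (by linarith)).comp tendsto_natCast_atTop_atTop)
    rw [mul_zero] at h1
    have := ENNReal.tendsto_ofReal h1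
    simpa using this
  apply tendsto_of_tendsto_of_tendsto_of_le_of_le' tendsto_const_nhds hlim
  · exact Filter.Eventually.of_forall fun n => zero_le
  · exact (eventually_ge_atTop 1).mono fun n hn => hbound n hn

theorem stmt13 {S : Type*} [MeasurableSpace S] (P₀ : Measure S) [IsProbabilityMeasure P₀]
    {Ω : Type*} [MeasurableSpace Ω] (μ : Measure Ω) [IsProbabilityMeasure μ]
    (f : ℝ → EReal) (hf : IsDivergenceFn f) (ρ : ℝ) (hρ : 0 < ρ)
    (d : ℕ) (X : Set (Fin d → ℝ)) (hXne : X.Nonempty) (hXc : IsCompact X)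
    (ℓ : (Fin d → ℝ) → S → ℝ)
    (hmeas : Measurable fun q : (Fin d → ℝ) × S => ℓ q.1 q.2)
    (hcont : ∀ s : S, ContinuousOn (fun x => ℓ x s) X)
    (Zbar : S → ℝ) (hZbarMeas : Measurable Zbar) (hZbarNN : ∀ s, 0 ≤ Zbar s)
    (henv : ∀ x ∈ X, ∀ s : S, |ℓ x s| ≤ Zbar s)
    (ε : ℝ) (hε : 0 < ε) (hmom : Integrable (fun s => Zbar s ^ (1 + ε)) P₀)
    (Z : ℕ → Ω → S) (hZ : ∀ i, Measurable (Z i))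
    (hindep : iIndepFun Z μ)
    (hlaw : ∀ i, Measure.map (Z i) μ = P₀) :
    (∀ δ : ℝ, 0 < δ →
      Tendsto (fun n : ℕ => μ {ω |
          δ ≤ |sInf ((fun x : Fin d → ℝ =>
                  sSup ((fun p : Fin n → ℝ => ∑ i : Fin n, p i * ℓ x (Z i.1 ω))
                    '' simplexBall f n ρ)) '' X)
                - sInf ((fun x : Fin d → ℝ => ∫ s, ℓ x s ∂P₀) '' X)|})
        atTop (nhds 0)) ∧
    (∀ δ : ℝ, 0 < δ →
      Tendsto (fun n : ℕ => μ {ω |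
          δ ≤ sSup ((fun x : Fin d → ℝ =>
                Metric.infDist x {y ∈ X | ∀ y' ∈ X, (∫ s, ℓ y s ∂P₀) ≤ ∫ s, ℓ y' s ∂P₀}) ''
              {x ∈ X | ∀ x' ∈ X,
                sSup ((fun p : Fin n → ℝ => ∑ i : Fin n, p i * ℓ x (Z i.1 ω))
                  '' simplexBall f n ρ) ≤
                sSup ((fun p : Fin n → ℝ => ∑ i : Fin n, p i * ℓ x' (Z i.1 ω))
                  '' simplexBall f n ρ)})})
        atTop (nhds 0)) := by
  classical
  have hZbarInt : Integrable Zbar P₀ := by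
    have h1 : Integrable (fun s => Zbar s ^ ((1:ℝ)+ε) + 1) P₀ := hmom.add (integrable_const 1)
    apply h1.mono' hZbarMeas.aestronglyMeasurable
    apply Filter.Eventually.of_forall
    intro s
    rw [Real.norm_eq_abs, abs_of_nonneg (hZbarNN s)]
    rcases le_or_gt (Zbar s) 1 with h | h
    · nlinarith [Real.rpow_nonneg (hZbarNN s) ((1:ℝ)+ε)]
    · calc Zbar s = Zbar s ^ ((1:ℝ)) := (Real.rpow_one _).symm
        _ ≤ Zbar s ^ ((1:ℝ)+ε) := Real.rpow_le_rpow_of_exponent_le h.le (by linarith)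
        _ ≤ _ := by linarith
  have hmeasx : ∀ x : Fin d → ℝ, Measurable (fun s => ℓ x s) := fun x =>
    hmeas.comp (measurable_const.prodMk measurable_id)
  have hlint : ∀ x ∈ X, Integrable (fun s => ℓ x s) P₀ := fun x hx =>
    hZbarInt.mono' (hmeasx x).aestronglyMeasurable
      (Filter.Eventually.of_forall fun s => by rw [Real.norm_eq_abs]; exact henv x hx s)
  have hFcont : ContinuousOn (fun x => ∫ s, ℓ x s ∂P₀) X := by
    apply continuousOn_of_dominated (bound := Zbar)
    · exact fun x _ => (hmeasx x).aestronglyMeasurable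
    · exact fun x hx => Filter.Eventually.of_forall fun s => by
        rw [Real.norm_eq_abs]; exact henv x hx s
    · exact hZbarInt
    · exact Filter.Eventually.of_forall fun s => hcont s
  obtain ⟨y₀, hy₀X, hy₀min'⟩ := hXc.exists_isMinOn hXne hFcont
  have hy₀min : ∀ y ∈ X, (∫ s, ℓ y₀ s ∂P₀) ≤ ∫ s, ℓ y s ∂P₀ := fun y hy => hy₀min' hy
  -- the master lemma
  have hmaster : ∀ c : ℝ, 0 < c → Tendsto (fun n : ℕ => μ {ω | ¬ ∀ x ∈ X,
      |sSup ((fun p : Fin n → ℝ => ∑ i : Fin n, p i * ℓ x (Z i.1 ω)) '' simplexBall f n ρ)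
        - ∫ s, ℓ x s ∂P₀| ≤ c}) atTop (nhds 0) := by
    intro c hc
    obtain ⟨η₀, hη₀, hlb⟩ := hf.lower_bound
    have hγ : (0:ℝ) < c/8 := by linarith
    set γ := c/8 with hγdef
    set β := ε/(2*(1+ε)) with hβdef
    have hε1 : (0:ℝ) < 1 + ε := by linarith
    have hβ : 0 < β := div_pos hε (by linarith)
    set ηs : ℕ → ℝ := fun n => (n:ℝ) ^ (-β) with hηsdef
    have hηspos : ∀ n : ℕ, 1 ≤ n → 0 < ηs n := fun n hn =>
      Real.rpow_pos_of_pos (by exact_mod_cast hn) _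
    have hηs0 : Tendsto ηs atTop (nhds 0) :=
      (tendsto_rpow_neg_atTop hβ).comp tendsto_natCast_atTop_atTop
    have hchoice : ∀ x ∈ X, ∃ k : ℕ,
        (∫ s, sSup ((fun y => ℓ y s) '' (Metric.ball x (1/(k+1)) ∩ X)) ∂P₀
          ≤ (∫ s, ℓ x s ∂P₀) + γ) ∧
        ((∫ s, ℓ x s ∂P₀) - γ
          ≤ ∫ s, sInf ((fun y => ℓ y s) '' (Metric.ball x (1/(k+1)) ∩ X)) ∂P₀) :=
      fun x hx => cover_choice P₀ hmeas hcont henv hZbarInt hx hγ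
    choose! kk hkk1 hkk2 using hchoice
    have hrpos : ∀ j : Fin d → ℝ, (0:ℝ) < 1/(kk j+1) := fun j => by positivity
    have hXcover : X ⊆ ⋃ x ∈ X, Metric.ball x (1/(kk x+1)) := fun x hx =>
      Set.mem_biUnion hx (Metric.mem_ball_self (hrpos x))
    obtain ⟨tset, htsub, htfin, htcov⟩ :=
      hXc.elim_finite_subcover_image (fun x _ => Metric.isOpen_ball) hXcover
    set t' : Finset (Fin d → ℝ) := htfin.toFinset with ht'def
    have ht'mem : ∀ j, j ∈ t' ↔ j ∈ tset := fun j => htfin.mem_toFinset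
    set Gup : (Fin d → ℝ) → S → ℝ :=
      fun j s => sSup ((fun y => ℓ y s) '' (Metric.ball j (1/(kk j+1)) ∩ X)) with hGupdef
    set Glo : (Fin d → ℝ) → S → ℝ :=
      fun j s => sInf ((fun y => ℓ y s) '' (Metric.ball j (1/(kk j+1)) ∩ X)) with hGlodef
    have propsU : ∀ j ∈ X, Measurable (Gup j) ∧
        (∀ s, ∀ y ∈ Metric.ball j (1/(kk j+1)) ∩ X, ℓ y s ≤ Gup j s) ∧
        (∀ s, |Gup j s| ≤ Zbar s) := fun j hj =>
      ballSup_props hmeas hcont henv hj (hrpos j)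
    have propsI : ∀ j ∈ X, Measurable (Glo j) ∧
        (∀ s, ∀ y ∈ Metric.ball j (1/(kk j+1)) ∩ X, Glo j s ≤ ℓ y s) ∧
        (∀ s, |Glo j s| ≤ Zbar s) := fun j hj =>
      ballInf_props hmeas hcont henv hj (hrpos j)
    have hIup : ∀ j ∈ X, ∫ s, Gup j s ∂P₀ ≤ (∫ s, ℓ j s ∂P₀) + γ := hkk1
    have hIlo : ∀ j ∈ X, (∫ s, ℓ j s ∂P₀) - γ ≤ ∫ s, Glo j s ∂P₀ := hkk2
    have hGupInt : ∀ j ∈ X, Integrable (Gup j) P₀ := fun j hj =>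
      hZbarInt.mono' ((propsU j hj).1).aestronglyMeasurable
        (Filter.Eventually.of_forall fun s => by
          rw [Real.norm_eq_abs]; exact (propsU j hj).2.2 s)
    have hGloInt : ∀ j ∈ X, Integrable (Glo j) P₀ := fun j hj =>
      hZbarInt.mono' ((propsI j hj).1).aestronglyMeasurable
        (Filter.Eventually.of_forall fun s => by
          rw [Real.norm_eq_abs]; exact (propsI j hj).2.2 s)
    set Ψ : ℕ → Ω → ℝ := fun n ω =>
      ηs n * ((∑ i ∈ Finset.range n, Zbar (Z i ω)) / n) +
      ∑ j ∈ t', (|(∑ i ∈ Finset.range n, Gup j (Z i ω)) / n - ∫ s, Gup j s ∂P₀|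
        + |(∑ i ∈ Finset.range n, Glo j (Z i ω)) / n - ∫ s, Glo j s ∂P₀|) with hΨdef
    have hΨmeas : ∀ n, Measurable (Ψ n) := by
      intro n
      apply Measurable.add
      · exact (Measurable.div_const (Finset.measurable_sum _ fun i _ =>
          hZbarMeas.comp (hZ i)) _).const_mul _
      · apply Finset.measurable_sum
        intro j hj
        have hjX : j ∈ X := htsub ((ht'mem j).1 hj)
        apply Measurable.add
        · exact ((Measurable.div_const (Finset.measurable_sum _ fun i _ =>
            ((propsU j hjX).1).comp (hZ i)) _).sub measurable_const).abs
        · exact ((Measurable.div_const (Finset.measurable_sum _ fun i _ =>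
            ((propsI j hjX).1).comp (hZ i)) _).sub measurable_const).abs
    have hΨae : ∀ᵐ ω ∂μ, Tendsto (fun n => Ψ n ω) atTop (nhds 0) := by
      have haeW := slln_comp μ P₀ Z hZ hindep hlaw Zbar hZbarMeas hZbarInt
      have haeU : ∀ᵐ ω ∂μ, ∀ j ∈ tset, Tendsto
          (fun n => (∑ i ∈ Finset.range n, Gup j (Z i ω)) / n) atTop
          (nhds (∫ s, Gup j s ∂P₀)) := by
        rw [ae_ball_iff htfin.countable]
        intro j hj
        exact slln_comp μ P₀ Z hZ hindep hlaw (Gup j) ((propsU j (htsub hj)).1)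
          (hGupInt j (htsub hj))
      have haeL : ∀ᵐ ω ∂μ, ∀ j ∈ tset, Tendsto
          (fun n => (∑ i ∈ Finset.range n, Glo j (Z i ω)) / n) atTop
          (nhds (∫ s, Glo j s ∂P₀)) := by
        rw [ae_ball_iff htfin.countable]
        intro j hj
        exact slln_comp μ P₀ Z hZ hindep hlaw (Glo j) ((propsI j (htsub hj)).1)
          (hGloInt j (htsub hj))
      filter_upwards [haeW, haeU, haeL] with ω h1 h2 h3
      have hterm1 : Tendsto (fun n => ηs n * ((∑ i ∈ Finset.range n, Zbar (Z i ω)) / n))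
          atTop (nhds 0) := by
        have := hηs0.mul h1
        rwa [zero_mul] at this
      have hterm2 : Tendsto (fun n => ∑ j ∈ t',
          (|(∑ i ∈ Finset.range n, Gup j (Z i ω)) / n - ∫ s, Gup j s ∂P₀|
            + |(∑ i ∈ Finset.range n, Glo j (Z i ω)) / n - ∫ s, Glo j s ∂P₀|)) atTop
          (nhds 0) := by
        have h0 : Tendsto (fun n => ∑ j ∈ t',
            (|(∑ i ∈ Finset.range n, Gup j (Z i ω)) / n - ∫ s, Gup j s ∂P₀|
              + |(∑ i ∈ Finset.range n, Glo j (Z i ω)) / n - ∫ s, Glo j s ∂P₀|)) atTop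
            (nhds (∑ _j ∈ t', ((0:ℝ) + 0))) := by
          apply tendsto_finset_sum
          intro j hj
          have hjset := (ht'mem j).1 hj
          have hu : Tendsto (fun n => |(∑ i ∈ Finset.range n, Gup j (Z i ω)) / n
              - ∫ s, Gup j s ∂P₀|) atTop (nhds 0) := by
            have := ((h2 j hjset).sub
              (tendsto_const_nhds (x := ∫ s, Gup j s ∂P₀))).abs
            simpa using this
          have hl : Tendsto (fun n => |(∑ i ∈ Finset.range n, Glo j (Z i ω)) / n
              - ∫ s, Glo j s ∂P₀|) atTop (nhds 0) := by
            have := ((h3 j hjset).sub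
              (tendsto_const_nhds (x := ∫ s, Glo j s ∂P₀))).abs
            simpa using this
          exact hu.add hl
        simpa using h0
      have := hterm1.add hterm2
      simp only [hΨdef]
      simpa using this
    have hΨim : ∀ θ : ℝ, 0 < θ → Tendsto (fun n => μ {ω | θ ≤ Ψ n ω}) atTop (nhds 0) := by
      intro θ hθ
      have hTIM : TendstoInMeasure μ Ψ atTop (fun _ => (0:ℝ)) :=
        tendstoInMeasure_of_tendsto_ae (fun n => (hΨmeas n).aestronglyMeasurable) hΨae
      apply tendsto_of_tendsto_of_tendsto_of_le_of_le tendsto_const_nhds (tendstoInMeasure_iff_dist.1 hTIM θ hθ)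
        (fun n => zero_le)
      intro n
      apply measure_mono
      intro ω hω
      simp only [Set.mem_setOf_eq] at hω ⊢
      rw [Real.dist_eq, sub_zero]
      exact le_trans hω (le_abs_self _)
    have hCn := fold_max_markov P₀ μ hZbarMeas hZbarNN hε hmom Z hZ hlaw hβdef
      (κ := c/(8*ρ)) (by positivity)
    have hηn : ∀ n : ℕ, 1 ≤ n → ηs n * (n:ℝ) = (n:ℝ)^((1:ℝ)-β) := by
      intro n hn
      have hn0 : (0:ℝ) < n := by exact_mod_cast hn
      have h := Real.rpow_add hn0 (-β) 1
      rw [Real.rpow_one] at h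
      simp only [hηsdef]
      rw [show (1:ℝ)-β = -β+1 by ring, h]
    have hkey : ∀ n : ℕ, 1 ≤ n → ηs n ≤ η₀ → ∀ ω : Ω, ∀ x ∈ X,
        |sSup ((fun p : Fin n → ℝ => ∑ i : Fin n, p i * ℓ x (Z i.1 ω)) '' simplexBall f n ρ)
          - ∫ s, ℓ x s ∂P₀|
        ≤ Ψ n ω + 2*ρ/ηs n * ((Finset.range n).fold max 0 (fun i => Zbar (Z i ω))) / n
          + 2*γ := by
      intro n hn1 hηle ω x hx
      have hn0 : (0:ℝ) < n := by exact_mod_cast hn1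
      have hηp := hηspos n hn1
      have hzw : ∀ i : Fin n, |ℓ x (Z i.1 ω)| ≤ Zbar (Z i.1 ω) := fun i => henv x hx _
      have hWb : ∀ i : Fin n, Zbar (Z i.1 ω)
          ≤ (Finset.range n).fold max 0 (fun i => Zbar (Z i ω)) :=
        fun i => (Finset.le_fold_max _).2 (Or.inr ⟨i.1, Finset.mem_range.2 i.2, le_rfl⟩)
      have hW0 : 0 ≤ (Finset.range n).fold max 0 (fun i => Zbar (Z i ω)) :=
        (Finset.le_fold_max _).2 (Or.inl le_rfl)
      have h1 := hatF_sub_mean_abs_le hf hρ hlb hn1 hηp hηle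
        (fun i : Fin n => ℓ x (Z i.1 ω)) (fun i : Fin n => Zbar (Z i.1 ω)) hzw hW0 hWb
      rw [Fin.sum_univ_eq_sum_range (fun i => ℓ x (Z i ω)) n,
          Fin.sum_univ_eq_sum_range (fun i => Zbar (Z i ω)) n] at h1
      obtain ⟨j, hjset, hxball⟩ := Set.mem_iUnion₂.1 (htcov hx)
      have hjX : j ∈ X := htsub hjset
      have hjt' : j ∈ t' := (ht'mem j).2 hjset
      have hxA : x ∈ Metric.ball j (1/(kk j+1)) ∩ X := ⟨hxball, hx⟩
      have hmean_le : (∑ i ∈ Finset.range n, ℓ x (Z i ω))/n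
          ≤ (∑ i ∈ Finset.range n, Gup j (Z i ω))/n := by
        rw [div_le_div_iff_of_pos_right hn0]
        exact Finset.sum_le_sum fun i _ => (propsU j hjX).2.1 (Z i ω) x hxA
      have hmean_ge : (∑ i ∈ Finset.range n, Glo j (Z i ω))/n
          ≤ (∑ i ∈ Finset.range n, ℓ x (Z i ω))/n := by
        rw [div_le_div_iff_of_pos_right hn0]
        exact Finset.sum_le_sum fun i _ => (propsI j hjX).2.1 (Z i ω) x hxA
      have hFx_ge : (∫ s, Glo j s ∂P₀) ≤ ∫ s, ℓ x s ∂P₀ :=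
        integral_mono (hGloInt j hjX) (hlint x hx) fun s => (propsI j hjX).2.1 s x hxA
      have hFx_le : (∫ s, ℓ x s ∂P₀) ≤ ∫ s, Gup j s ∂P₀ :=
        integral_mono (hlint x hx) (hGupInt j hjX) fun s => (propsU j hjX).2.1 s x hxA
      have hIupj := hIup j hjX
      have hIloj := hIlo j hjX
      have hterm : |(∑ i ∈ Finset.range n, Gup j (Z i ω)) / n - ∫ s, Gup j s ∂P₀|
          + |(∑ i ∈ Finset.range n, Glo j (Z i ω)) / n - ∫ s, Glo j s ∂P₀|
          ≤ ∑ j ∈ t', (|(∑ i ∈ Finset.range n, Gup j (Z i ω)) / n - ∫ s, Gup j s ∂P₀|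
            + |(∑ i ∈ Finset.range n, Glo j (Z i ω)) / n - ∫ s, Glo j s ∂P₀|) :=
        Finset.single_le_sum (f := fun j =>
          |(∑ i ∈ Finset.range n, Gup j (Z i ω)) / n - ∫ s, Gup j s ∂P₀|
            + |(∑ i ∈ Finset.range n, Glo j (Z i ω)) / n - ∫ s, Glo j s ∂P₀|)
          (fun j _ => by positivity) hjt'
      have habs1 : (∑ i ∈ Finset.range n, Gup j (Z i ω))/n - (∫ s, Gup j s ∂P₀)
          ≤ |(∑ i ∈ Finset.range n, Gup j (Z i ω))/n - ∫ s, Gup j s ∂P₀| := le_abs_self _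
      have habs2 : (∫ s, Glo j s ∂P₀) - (∑ i ∈ Finset.range n, Glo j (Z i ω))/n
          ≤ |(∑ i ∈ Finset.range n, Glo j (Z i ω))/n - ∫ s, Glo j s ∂P₀| := by
        rw [abs_sub_comm]; exact le_abs_self _
      have h2 : |(∑ i ∈ Finset.range n, ℓ x (Z i ω))/n - ∫ s, ℓ x s ∂P₀|
          ≤ (∑ j ∈ t', (|(∑ i ∈ Finset.range n, Gup j (Z i ω)) / n - ∫ s, Gup j s ∂P₀|
            + |(∑ i ∈ Finset.range n, Glo j (Z i ω)) / n - ∫ s, Glo j s ∂P₀|)) + 2*γ := by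
        have hn1 := abs_nonneg ((∑ i ∈ Finset.range n, Gup j (Z i ω))/n - ∫ s, Gup j s ∂P₀)
        have hn2 := abs_nonneg ((∑ i ∈ Finset.range n, Glo j (Z i ω))/n - ∫ s, Glo j s ∂P₀)
        rw [abs_le]
        constructor
        · linarith
        · linarith
      have htri := abs_sub_le
        (sSup ((fun p : Fin n → ℝ => ∑ i : Fin n, p i * ℓ x (Z i.1 ω)) '' simplexBall f n ρ))
        ((∑ i ∈ Finset.range n, ℓ x (Z i ω))/n) (∫ s, ℓ x s ∂P₀)
      have hma : ηs n * (∑ i ∈ Finset.range n, Zbar (Z i ω)) / n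
          = ηs n * ((∑ i ∈ Finset.range n, Zbar (Z i ω)) / n) := mul_div_assoc _ _ _
      simp only [hΨdef]
      linarith
    have hev : ∀ᶠ n : ℕ in atTop, 1 ≤ n ∧ ηs n ≤ η₀ :=
      (eventually_ge_atTop 1).and (hηs0.eventually (eventually_le_nhds hη₀))
    have hup : Tendsto (fun n : ℕ => μ {ω | c/4 ≤ Ψ n ω}
        + μ {ω | c/(8*ρ) * (n:ℝ)^((1:ℝ)-β) ≤
          (Finset.range n).fold max 0 (fun i => Zbar (Z i ω))}) atTop (nhds 0) := by
      have := (hΨim (c/4) (by linarith)).add hCn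
      simpa using this
    apply tendsto_of_tendsto_of_tendsto_of_le_of_le' tendsto_const_nhds hup
    · exact Filter.Eventually.of_forall fun n => zero_le
    · filter_upwards [hev] with n hn
      refine le_trans (measure_mono ?_) (measure_union_le _ _)
      intro ω hω
      simp only [Set.mem_setOf_eq] at hω
      by_contra hcon
      simp only [Set.mem_union, Set.mem_setOf_eq, not_or, not_le] at hcon
      apply hω
      intro x hx
      have hb := hkey n hn.1 hn.2 ω x hx
      have hn0 : (0:ℝ) < n := by exact_mod_cast hn.1
      have hηp := hηspos n hn.1
      have hfold0 : 0 ≤ (Finset.range n).fold max 0 (fun i => Zbar (Z i ω)) :=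
        (Finset.le_fold_max _).2 (Or.inl le_rfl)
      have hC : 2*ρ/ηs n * ((Finset.range n).fold max 0 (fun i => Zbar (Z i ω))) / n
          < c/4 := by
        have h2 : 2*ρ/ηs n * ((Finset.range n).fold max 0 (fun i => Zbar (Z i ω))) / n
            < 2*ρ/ηs n * (c/(8*ρ) * (n:ℝ)^((1:ℝ)-β)) / n := by
          rw [div_lt_div_iff_of_pos_right hn0]
          exact mul_lt_mul_of_pos_left hcon.2 (by positivity)
        have h3 : 2*ρ/ηs n * (c/(8*ρ) * (n:ℝ)^((1:ℝ)-β)) / n = c/4 := by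
          rw [← hηn n hn.1]
          field_simp
          ring
        linarith
      calc |sSup ((fun p : Fin n → ℝ => ∑ i : Fin n, p i * ℓ x (Z i.1 ω))
              '' simplexBall f n ρ) - ∫ s, ℓ x s ∂P₀|
          ≤ Ψ n ω + 2*ρ/ηs n * ((Finset.range n).fold max 0 (fun i => Zbar (Z i ω))) / n
            + 2*γ := hb
        _ ≤ c := by
            have := hcon.1
            rw [hγdef] at *
            linarith
  constructor
  · intro δ hδ
    apply tendsto_of_tendsto_of_tendsto_of_le_of_le tendsto_const_nhds
      (hmaster (δ/2) (by linarith)) (fun n => zero_le)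
    intro n
    apply measure_mono
    intro ω hω
    simp only [Set.mem_setOf_eq] at hω ⊢
    intro hgood
    have hb := abs_sInf_image_sub_le (G := fun x : Fin d → ℝ =>
        sSup ((fun p : Fin n → ℝ => ∑ i : Fin n, p i * ℓ x (Z i.1 ω)) '' simplexBall f n ρ))
      (F := fun x : Fin d → ℝ => ∫ s, ℓ x s ∂P₀) hy₀X hy₀min hgood
    have : ¬ (δ ≤ |sInf ((fun x : Fin d → ℝ =>
        sSup ((fun p : Fin n → ℝ => ∑ i : Fin n, p i * ℓ x (Z i.1 ω)) '' simplexBall f n ρ))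
          '' X) - sInf ((fun x : Fin d → ℝ => ∫ s, ℓ x s ∂P₀) '' X)|) := by
      push_neg
      calc |_ - _| ≤ δ/2 := hb
        _ < δ := by linarith
    exact this hω
  · intro δ hδ
    obtain ⟨c, hc, hstab⟩ := argmin_stability hXc hXne hFcont hδ
    apply tendsto_of_tendsto_of_tendsto_of_le_of_le tendsto_const_nhds
      (hmaster c hc) (fun n => zero_le)
    intro n
    apply measure_mono
    intro ω hω
    simp only [Set.mem_setOf_eq] at hω ⊢
    intro hgood
    have hb := hstab (fun x : Fin d → ℝ =>
        sSup ((fun p : Fin n → ℝ => ∑ i : Fin n, p i * ℓ x (Z i.1 ω)) '' simplexBall f n ρ))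
      hgood
    exact absurd hω (not_le.2 hb)
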